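/- Define the effective step sizes γ̄_k := γ·‖w_k‖^{L−2}·Σ_{j=1}^n (−l′(p_j(w_k))). Under the late-stage training assumption, the effective step sizes are not summable: Σ_{k≥k₀} γ̄_k = +∞. -/

import Mathlib

set_option maxHeartbeats 1000000


open scoped RealInnerProductSpace

/-- The effective step sizes are not summable. -/
theorem stmt_13 {d n L : ℕ} (hd : 0 < d) (hn : 0 < n) (hL : 0 < L)
    (p : Fin n → EuclideanSpace ℝ (Fin d) → ℝ)
    (hplip : ∀ i, LocallyLipschitz (p i))
    (hphom : ∀ i, ∀ c : ℝ, 0 < c → ∀ w, p i (c • w) = c ^ L * p i w)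
    (a : Fin n → EuclideanSpace ℝ (Fin d) → EuclideanSpace ℝ (Fin d))
    (haw : ∀ i w, ⟪a i w, w⟫ = (L : ℝ) * p i w)
    (hahom : ∀ i, ∀ c : ℝ, 0 < c → ∀ w, a i (c • w) = c ^ (L - 1) • a i w)
    (habd : ∀ i, ∃ M : ℝ, ∀ u : EuclideanSpace ℝ (Fin d), ‖u‖ = 1 → ‖a i u‖ ≤ M)
    (l : ℝ → ℝ) (hl : Differentiable ℝ l)
    (hl' : ∀ q : ℝ, 0 ≤ q →
      (1 / 2) * Real.exp (-q) ≤ -deriv l q ∧ -deriv l q ≤ Real.exp (-q))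
    (γ : ℝ) (hγ : 0 < γ)
    (B : ℕ → Finset (Fin n)) (hB : ∀ k, (B k).Nonempty)
    (w : ℕ → EuclideanSpace ℝ (Fin d))
    (hw : ∀ k, w (k + 1) =
      w k - (γ / (B k).card) • ∑ i ∈ B k, deriv l (p i (w k)) • a i (w k))
    (ε : ℝ) (hε : 0 < ε) (k₀ : ℕ)
    (hlate : ∀ k ≥ k₀, w k ≠ 0 ∧ ε ≤ ⨅ i, p i ((‖w k‖)⁻¹ • w k))
    (γbar : ℕ → ℝ)
    (hγbar : ∀ k, γbar k =
      γ * ‖w k‖ ^ ((L : ℤ) - 2) * ∑ j, -deriv l (p j (w k))) :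
    Filter.Tendsto (fun N => ∑ k ∈ Finset.Ico k₀ N, γbar k)
      Filter.atTop Filter.atTop := by
  classical
  haveI hnne : Nonempty (Fin n) := ⟨⟨0, hn⟩⟩
  -- uniform bound `M ≥ 1` on `‖a i u‖` over the unit sphere
  choose M0 hM0 using habd
  set M : ℝ := max 1 (Finset.univ.sup' Finset.univ_nonempty M0) with hMdef
  have hM1 : (1:ℝ) ≤ M := le_max_left _ _
  have hMpos : (0:ℝ) < M := lt_of_lt_of_le one_pos hM1
  have hMa : ∀ i (u : EuclideanSpace ℝ (Fin d)), ‖u‖ = 1 → ‖a i u‖ ≤ M := by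
    intro i u hu
    exact (hM0 i u hu).trans
      ((Finset.le_sup' M0 (Finset.mem_univ i)).trans (le_max_right _ _))
  -- bound on `p ⟨0,hn⟩` on the unit sphere
  obtain ⟨C0, hC0⟩ : ∃ C0 : ℝ, ∀ u ∈ Metric.sphere (0:EuclideanSpace ℝ (Fin d)) 1,
      p ⟨0,hn⟩ u ≤ C0 := by
    have hcomp : IsCompact (Metric.sphere (0:EuclideanSpace ℝ (Fin d)) 1) :=
      isCompact_sphere 0 1
    obtain ⟨C0, hC0⟩ := hcomp.bddAbove_image ((hplip ⟨0,hn⟩).continuous).continuousOn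
    exact ⟨C0, fun u hu => hC0 (Set.mem_image_of_mem _ hu)⟩
  set Cb : ℝ := max C0 0 with hCb
  have hCb0 : 0 ≤ Cb := le_max_right _ _
  -- main per-step estimates
  have key : ∀ k, k₀ ≤ k →
      (‖w k‖ ≤ ‖w (k+1)‖) ∧
      ((1/(2*M)) * (Real.log ‖w (k+1)‖ - Real.log ‖w k‖) ≤ γbar k) ∧
      ((γ/2) * (‖w k‖^L / ‖w k‖^2) * Real.exp (-(Cb * ‖w k‖^L)) ≤ γbar k) := by
    intro k hk
    obtain ⟨hw0, hεle⟩ := hlate k hk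
    have hNpos : (0:ℝ) < ‖w k‖ := norm_pos_iff.mpr hw0
    have hN0 : ‖w k‖ ≠ 0 := ne_of_gt hNpos
    set u : EuclideanSpace ℝ (Fin d) := (‖w k‖)⁻¹ • w k with hu
    have hun : ‖u‖ = 1 := by
      rw [hu, norm_smul, Real.norm_eq_abs, abs_of_pos (inv_pos.mpr hNpos),
        inv_mul_cancel₀ hN0]
    have hwu : w k = ‖w k‖ • u := by
      rw [hu, smul_smul, mul_inv_cancel₀ hN0, one_smul]
    have hpu : ∀ i, ε ≤ p i u := by
      intro i
      exact hεle.trans (ciInf_le (Set.finite_range _).bddBelow i)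
    have hpw : ∀ i, p i (w k) = ‖w k‖ ^ L * p i u := by
      intro i
      conv_lhs => rw [hwu]
      exact hphom i _ hNpos u
    have haw' : ∀ i, ‖a i (w k)‖ ≤ M * ‖w k‖^(L-1) := by
      intro i
      have h1 : a i (w k) = ‖w k‖^(L-1) • a i u := by
        conv_lhs => rw [hwu]
        exact hahom i _ hNpos u
      rw [h1, norm_smul, Real.norm_eq_abs, abs_of_nonneg (by positivity)]
      have h2 := hMa i u hun
      nlinarith [pow_nonneg hNpos.le (L-1)]
    have hFne : (Finset.univ : Finset (Fin n)).Nonempty := Finset.univ_nonempty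
    have hppos : ∀ i, 0 ≤ p i (w k) := by
      intro i
      rw [hpw i]
      have := hpu i
      nlinarith [pow_pos hNpos L]
    obtain ⟨j₀, _, hj₀⟩ := Finset.exists_mem_eq_inf' hFne (fun i => p i (w k))
    set m : ℝ := p j₀ (w k) with hm
    have hmle : ∀ i, m ≤ p i (w k) := by
      intro i
      rw [← hj₀]
      exact Finset.inf'_le _ (Finset.mem_univ i)
    have hm0 : 0 ≤ m := hppos j₀
    have hld : ∀ i, deriv l (p i (w k)) ≤ 0 := by
      intro i
      have h := (hl' _ (hppos i)).1
      nlinarith [Real.exp_pos (-(p i (w k)))]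
    have hlub : ∀ i, -deriv l (p i (w k)) ≤ Real.exp (-m) := by
      intro i
      exact ((hl' _ (hppos i)).2).trans (Real.exp_le_exp.mpr (by linarith [hmle i]))
    have hsum : (1/2) * Real.exp (-m) ≤ ∑ j, -deriv l (p j (w k)) := by
      have h1 : (1/2) * Real.exp (-m) ≤ -deriv l (p j₀ (w k)) := by
        rw [hm]
        exact (hl' _ (hppos j₀)).1
      refine h1.trans (Finset.single_le_sum
        (f := fun i => -deriv l (p i (w k))) (fun i _ => ?_) (Finset.mem_univ j₀))
      exact le_trans (by positivity) (hl' _ (hppos i)).1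
    have hz : (0:ℝ) < ‖w k‖ ^ ((L:ℤ) - 2) := zpow_pos hNpos _
    have hγb : (γ/2) * (‖w k‖ ^ ((L:ℤ)-2) * Real.exp (-m)) ≤ γbar k := by
      rw [hγbar k]
      have h2 := mul_le_mul_of_nonneg_left hsum (le_of_lt (mul_pos hγ hz))
      calc (γ/2) * (‖w k‖ ^ ((L:ℤ)-2) * Real.exp (-m))
          = (γ * ‖w k‖ ^ ((L:ℤ)-2)) * ((1/2) * Real.exp (-m)) := by ring
        _ ≤ γ * ‖w k‖ ^ ((L:ℤ)-2) * ∑ j, -deriv l (p j (w k)) := h2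
    have hs0 : (0:ℝ) ≤ γ / ((B k).card : ℝ) := div_nonneg hγ.le (Nat.cast_nonneg _)
    have hinner : ‖w k‖^2 ≤ ⟪w (k+1), w k⟫ := by
      rw [hw k, inner_sub_left, real_inner_smul_left, sum_inner,
        real_inner_self_eq_norm_sq]
      have hterm : ∀ i ∈ B k, ⟪deriv l (p i (w k)) • a i (w k), w k⟫ ≤ 0 := by
        intro i _
        rw [real_inner_smul_left, haw i (w k)]
        have h3 := hppos i
        have h4 := hld i
        nlinarith [mul_nonneg (mul_nonneg (Nat.cast_nonneg (α := ℝ) L) h3) (neg_nonneg.mpr h4)]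
      have hsum0 : ∑ i ∈ B k, ⟪deriv l (p i (w k)) • a i (w k), w k⟫ ≤ 0 :=
        Finset.sum_nonpos hterm
      nlinarith [mul_nonneg hs0 (neg_nonneg.mpr hsum0)]
    have hmono1 : ‖w k‖ ≤ ‖w (k+1)‖ := by
      have h2 := hinner.trans (real_inner_le_norm _ _)
      have h3 : ‖w k‖ * ‖w k‖ ≤ ‖w (k+1)‖ * ‖w k‖ := by nlinarith
      exact le_of_mul_le_mul_right h3 hNpos
    have hcard : (0:ℝ) < ((B k).card : ℝ) := by
      exact_mod_cast Finset.card_pos.mpr (hB k)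
    have hstepnorm : ‖w (k+1) - w k‖ ≤ γ * M * ‖w k‖^(L-1) * Real.exp (-m) := by
      have hv : w (k+1) - w k
          = -((γ / ((B k).card:ℝ)) • ∑ i ∈ B k, deriv l (p i (w k)) • a i (w k)) := by
        rw [hw k]; abel
      rw [hv, norm_neg, norm_smul, Real.norm_eq_abs, abs_of_nonneg hs0]
      have hvb : ‖∑ i ∈ B k, deriv l (p i (w k)) • a i (w k)‖
          ≤ (B k).card • (Real.exp (-m) * (M * ‖w k‖^(L-1))) := by
        refine (norm_sum_le _ _).trans (Finset.sum_le_card_nsmul _ _ _ ?_)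
        intro i _
        rw [norm_smul, Real.norm_eq_abs, abs_of_nonpos (hld i)]
        exact mul_le_mul (hlub i) (haw' i) (norm_nonneg _) (Real.exp_pos _).le
      rw [nsmul_eq_mul] at hvb
      calc (γ / ((B k).card:ℝ)) * ‖∑ i ∈ B k, deriv l (p i (w k)) • a i (w k)‖
          ≤ (γ / ((B k).card:ℝ)) * (((B k).card:ℝ) * (Real.exp (-m) * (M * ‖w k‖^(L-1)))) :=
            mul_le_mul_of_nonneg_left hvb hs0
        _ = γ * M * ‖w k‖^(L-1) * Real.exp (-m) := by
            rw [← mul_assoc, div_mul_cancel₀ _ hcard.ne']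
            ring
    have hN1pos : (0:ℝ) < ‖w (k+1)‖ := lt_of_lt_of_le hNpos hmono1
    have hΔ : ‖w (k+1)‖ - ‖w k‖ ≤ γ * M * ‖w k‖^(L-1) * Real.exp (-m) :=
      le_trans (norm_sub_norm_le _ _) hstepnorm
    have hkey : ‖w k‖^(L-1) / ‖w k‖ = ‖w k‖^((L:ℤ)-2) := by
      rw [show ((L:ℤ)-2) = (((L-1:ℕ)):ℤ) + (-1) by omega,
        zpow_add₀ hN0, zpow_natCast, zpow_neg_one]
      field_simp
    have hlog : Real.log ‖w (k+1)‖ - Real.log ‖w k‖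
        ≤ γ * M * (‖w k‖^((L:ℤ)-2) * Real.exp (-m)) := by
      have h1 : Real.log ‖w (k+1)‖ - Real.log ‖w k‖
          = Real.log (‖w (k+1)‖ / ‖w k‖) := (Real.log_div (ne_of_gt hN1pos) hN0).symm
      rw [h1]
      have h2 : Real.log (‖w (k+1)‖ / ‖w k‖) ≤ ‖w (k+1)‖/‖w k‖ - 1 :=
        Real.log_le_sub_one_of_pos (by positivity)
      have h3 : ‖w (k+1)‖/‖w k‖ - 1 = (‖w (k+1)‖ - ‖w k‖)/‖w k‖ := by field_simp
      calc Real.log (‖w (k+1)‖ / ‖w k‖) ≤ (‖w (k+1)‖ - ‖w k‖)/‖w k‖ := by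
            rw [← h3]; exact h2
        _ ≤ (γ * M * ‖w k‖^(L-1) * Real.exp (-m))/‖w k‖ := by gcongr
        _ = γ * M * (‖w k‖^((L:ℤ)-2) * Real.exp (-m)) := by
            rw [← hkey]; ring
    have hfinal1 : (1/(2*M)) * (Real.log ‖w (k+1)‖ - Real.log ‖w k‖) ≤ γbar k := by
      have h4 := mul_le_mul_of_nonneg_left hlog (by positivity :
        (0:ℝ) ≤ 1/(2*M))
      refine h4.trans (le_trans (le_of_eq ?_) hγb)
      field_simp
    have hmC : m ≤ Cb * ‖w k‖^L := by
      have h5 := hmle ⟨0,hn⟩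
      have h6 := hpw ⟨0,hn⟩
      have h7 : p ⟨0,hn⟩ u ≤ C0 := hC0 u (mem_sphere_zero_iff_norm.mpr hun)
      have h8 : C0 ≤ Cb := le_max_left _ _
      nlinarith [pow_pos hNpos L, pow_nonneg hNpos.le L]
    have hfinal2 : (γ/2) * (‖w k‖^L / ‖w k‖^2) * Real.exp (-(Cb * ‖w k‖^L)) ≤ γbar k := by
      refine le_trans ?_ hγb
      have hzz : ‖w k‖ ^ ((L:ℤ)-2) = ‖w k‖^L / ‖w k‖^2 := by
        rw [show ((L:ℤ)-2) = (L:ℤ) - ((2:ℕ):ℤ) by norm_num, zpow_sub₀ hN0,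
          zpow_natCast, zpow_natCast]
      rw [hzz]
      have hexp : Real.exp (-(Cb * ‖w k‖^L)) ≤ Real.exp (-m) :=
        Real.exp_le_exp.mpr (by linarith)
      calc (γ/2) * (‖w k‖^L / ‖w k‖^2) * Real.exp (-(Cb * ‖w k‖^L))
          ≤ (γ/2) * (‖w k‖^L / ‖w k‖^2) * Real.exp (-m) :=
            mul_le_mul_of_nonneg_left hexp (by positivity)
        _ = (γ/2) * ((‖w k‖^L / ‖w k‖^2) * Real.exp (-m)) := by ring
    exact ⟨hmono1, hfinal1, hfinal2⟩
  -- the norm is monotone from k₀ on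
  have hmono : ∀ k, k₀ ≤ k → ∀ k', k ≤ k' → ‖w k‖ ≤ ‖w k'‖ := by
    intro k hk k' hk'
    induction k', hk' using Nat.le_induction with
    | base => exact le_rfl
    | succ K hK ih => exact ih.trans ((key K (hk.trans hK)).1)
  -- telescoping lower bound
  have htel : ∀ K, k₀ ≤ K →
      (1/(2*M)) * (Real.log ‖w K‖ - Real.log ‖w k₀‖) ≤ ∑ k ∈ Finset.Ico k₀ K, γbar k := by
    intro K hK
    have hsumtel : ∑ k ∈ Finset.Ico k₀ K, (Real.log ‖w (k+1)‖ - Real.log ‖w k‖)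
        = Real.log ‖w K‖ - Real.log ‖w k₀‖ := by
      induction K, hK using Nat.le_induction with
      | base => simp
      | succ K hK ih =>
        rw [Finset.sum_Ico_succ_top hK, ih]
        ring
    calc (1/(2*M)) * (Real.log ‖w K‖ - Real.log ‖w k₀‖)
        = ∑ k ∈ Finset.Ico k₀ K, (1/(2*M)) * (Real.log ‖w (k+1)‖ - Real.log ‖w k‖) := by
          rw [← Finset.mul_sum, hsumtel]
      _ ≤ ∑ k ∈ Finset.Ico k₀ K, γbar k :=
          Finset.sum_le_sum (fun k hk => (key k (Finset.mem_Ico.mp hk).1).2.1)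
  have hN0pos : (0:ℝ) < ‖w k₀‖ := norm_pos_iff.mpr (hlate k₀ le_rfl).1
  by_cases hbdd : ∃ R : ℝ, ∀ k, ‖w k‖ ≤ R
  · -- bounded case : each γbar k is bounded below by a positive constant
    obtain ⟨R, hR⟩ := hbdd
    have hRpos : 0 < R := lt_of_lt_of_le hN0pos (hR k₀)
    set δ : ℝ := (γ/2) * (‖w k₀‖^L / R^2) * Real.exp (-(Cb * R^L)) with hδ
    have hδpos : 0 < δ := by positivity
    have hlb : ∀ k, k₀ ≤ k → δ ≤ γbar k := by
      intro k hk
      refine le_trans ?_ (key k hk).2.2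
      have h1 : (0:ℝ) < ‖w k‖ := lt_of_lt_of_le hN0pos (hmono k₀ le_rfl k hk)
      have hNk : ‖w k₀‖ ≤ ‖w k‖ := hmono k₀ le_rfl k hk
      have hNkR : ‖w k‖ ≤ R := hR k
      have e1 : ‖w k₀‖^L ≤ ‖w k‖^L := pow_le_pow_left₀ hN0pos.le hNk L
      have e2 : ‖w k‖^2 ≤ R^2 := pow_le_pow_left₀ h1.le hNkR 2
      have e3 : Cb * ‖w k‖^L ≤ Cb * R^L :=
        mul_le_mul_of_nonneg_left (pow_le_pow_left₀ h1.le hNkR L) hCb0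
      have e4 : Real.exp (-(Cb * R^L)) ≤ Real.exp (-(Cb * ‖w k‖^L)) :=
        Real.exp_le_exp.mpr (by linarith)
      have e5 : ‖w k₀‖^L / R^2 ≤ ‖w k‖^L / ‖w k‖^2 :=
        div_le_div₀ (by positivity) e1 (by positivity) e2
      calc δ ≤ (γ/2) * (‖w k₀‖^L / R^2) * Real.exp (-(Cb * ‖w k‖^L)) :=
            mul_le_mul_of_nonneg_left e4 (by positivity)
        _ ≤ (γ/2) * (‖w k‖^L / ‖w k‖^2) * Real.exp (-(Cb * ‖w k‖^L)) :=
            mul_le_mul_of_nonneg_right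
              (mul_le_mul_of_nonneg_left e5 (by positivity)) (Real.exp_pos _).le
    rw [Filter.tendsto_atTop]
    intro b
    filter_upwards [Filter.eventually_ge_atTop (k₀ + Nat.ceil (b/δ) + 1)] with K hK
    have hK0 : k₀ ≤ K := by omega
    have hcard : ((Nat.ceil (b/δ) : ℕ) : ℝ) ≤ ((K - k₀ : ℕ) : ℝ) := by
      have : Nat.ceil (b/δ) ≤ K - k₀ := by omega
      exact_mod_cast this
    have hsumδ : δ * ((K - k₀:ℕ):ℝ) ≤ ∑ k ∈ Finset.Ico k₀ K, γbar k := by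
      calc δ * ((K-k₀:ℕ):ℝ) = ∑ _k ∈ Finset.Ico k₀ K, δ := by
            rw [Finset.sum_const, Nat.card_Ico, nsmul_eq_mul]
            ring
        _ ≤ ∑ k ∈ Finset.Ico k₀ K, γbar k :=
            Finset.sum_le_sum (fun k hk => hlb k (Finset.mem_Ico.mp hk).1)
    have hb : b ≤ δ * ((K-k₀:ℕ):ℝ) := by
      have h6 : b/δ ≤ ((Nat.ceil (b/δ) : ℕ) : ℝ) := Nat.le_ceil _
      have h7 : b/δ ≤ ((K-k₀:ℕ):ℝ) := h6.trans hcard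
      calc b = δ * (b/δ) := by field_simp
        _ ≤ δ * ((K-k₀:ℕ):ℝ) := mul_le_mul_of_nonneg_left h7 hδpos.le
    linarith
  · -- unbounded case : use the telescoping log bound
    push_neg at hbdd
    rw [Filter.tendsto_atTop]
    intro b
    have hcpos : (0:ℝ) < 1/(2*M) := by positivity
    obtain ⟨k₁, hk₁⟩ := hbdd (max (Real.exp (b/(1/(2*M)) + Real.log ‖w k₀‖))
      ((Finset.range (k₀+1)).sup' (by simp) (fun j => ‖w j‖)))
    have hk₁k₀ : k₀ ≤ k₁ := by
      by_contra h
      push_neg at h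
      have h1 : ‖w k₁‖ ≤ (Finset.range (k₀+1)).sup' (by simp) (fun j => ‖w j‖) :=
        Finset.le_sup' (fun j => ‖w j‖) (Finset.mem_range.mpr (by omega))
      have h2 := le_max_right (Real.exp (b/(1/(2*M)) + Real.log ‖w k₀‖))
        ((Finset.range (k₀+1)).sup' (by simp) (fun j => ‖w j‖))
      linarith
    filter_upwards [Filter.eventually_ge_atTop k₁] with K hK
    have hKk₀ : k₀ ≤ K := hk₁k₀.trans hK
    have h7 : Real.exp (b/(1/(2*M)) + Real.log ‖w k₀‖) ≤ ‖w K‖ :=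
      le_trans (le_max_left _ _) (le_trans hk₁.le (hmono k₁ hk₁k₀ K hK))
    have h8 : b/(1/(2*M)) + Real.log ‖w k₀‖ ≤ Real.log ‖w K‖ := by
      have h9 := Real.log_le_log (Real.exp_pos _) h7
      rwa [Real.log_exp] at h9
    have h10 := htel K hKk₀
    have h11 : b ≤ (1/(2*M)) * (Real.log ‖w K‖ - Real.log ‖w k₀‖) := by
      have h12 : b/(1/(2*M)) ≤ Real.log ‖w K‖ - Real.log ‖w k₀‖ := by linarith
      calc b = (1/(2*M)) * (b/(1/(2*M))) := by field_simp
        _ ≤ (1/(2*M)) * (Real.log ‖w K‖ - Real.log ‖w k₀‖) :=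
            mul_le_mul_of_nonneg_left h12 hcpos.le
    linarith
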